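/- Let e_{t+1} = (1-α)e_t + α(ξ_t + g_t) where ξ_t is a zero-mean random vector given the past with E‖ξ_t‖² ≤ σ², and ‖g_t‖ ≤ L‖x_t - x̄‖. Then E[‖e_{t+1}‖²] ≤ (1-α)E[‖e_t‖²] + αL²E[‖x_t - x̄‖²] + α²σ² for 0 < α ≤ 1. -/

import Mathlib

open MeasureTheory

section AuxStmt17

variable {Ω : Type*} {mΩ : MeasurableSpace Ω} {μ : Measure Ω}

lemma aux17_integrable_inner {E : Type*} [NormedAddCommGroup E] [InnerProductSpace ℝ E]
    {f g : Ω → E} (hf : MemLp f 2 μ) (hg : MemLp g 2 μ) :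
    Integrable (fun ω => (inner ℝ (f ω) (g ω) : ℝ)) μ := by
  have h := L2.integrable_inner (𝕜 := ℝ) (hf.toLp f) (hg.toLp g)
  refine h.congr ?_
  filter_upwards [hf.coeFn_toLp, hg.coeFn_toLp] with ω h1 h2
  rw [h1, h2]

lemma aux17_integrable_norm_sq {E : Type*} [NormedAddCommGroup E] [InnerProductSpace ℝ E]
    {f : Ω → E} (hf : MemLp f 2 μ) :
    Integrable (fun ω => ‖f ω‖ ^ 2) μ := by
  refine (aux17_integrable_inner hf hf).congr ?_
  filter_upwards with ω
  rw [real_inner_self_eq_norm_sq]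

end AuxStmt17

theorem stmt_17 {d : ℕ} {Ω : Type*} {mΩ : MeasurableSpace Ω}
    (μ : Measure Ω) [IsProbabilityMeasure μ]
    (m : MeasurableSpace Ω) (hm : m ≤ mΩ)
    (α L σ : ℝ) (hα0 : 0 < α) (hα1 : α ≤ 1) (hL : 0 ≤ L) (hσ : 0 ≤ σ)
    (e g ξ x : Ω → EuclideanSpace ℝ (Fin d)) (xbar : EuclideanSpace ℝ (Fin d))
    (he : MemLp e 2 μ) (hgmem : MemLp g 2 μ) (hξmem : MemLp ξ 2 μ)
    (hxmem : MemLp x 2 μ)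
    (hem : StronglyMeasurable[m] e) (hgm : StronglyMeasurable[m] g)
    (hxm : StronglyMeasurable[m] x)
    (hξzero : μ[ξ|m] =ᵐ[μ] 0)
    (hξvar : ∫ ω, ‖ξ ω‖ ^ 2 ∂μ ≤ σ ^ 2)
    (hg : ∀ᵐ ω ∂μ, ‖g ω‖ ≤ L * ‖x ω - xbar‖) :
    ∫ ω, ‖(1 - α) • e ω + α • (ξ ω + g ω)‖ ^ 2 ∂μ
      ≤ (1 - α) * ∫ ω, ‖e ω‖ ^ 2 ∂μ
        + α * L ^ 2 * ∫ ω, ‖x ω - xbar‖ ^ 2 ∂μ + α ^ 2 * σ ^ 2 := by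
  letI : MeasurableSpace Ω := mΩ
  haveI : SigmaFinite (μ.trim hm) := by infer_instance
  set v : Ω → EuclideanSpace ℝ (Fin d) := fun ω => (1 - α) • e ω + α • g ω with hv_def
  have hv : MemLp v 2 μ := (he.const_smul (1 - α)).add (hgmem.const_smul α)
  have hvm : StronglyMeasurable[m] v := (hem.const_smul (1 - α)).add (hgm.const_smul α)
  have hξint : Integrable ξ μ := hξmem.integrable one_le_two
  have Iv : Integrable (fun ω => ‖v ω‖ ^ 2) μ := aux17_integrable_norm_sq hv
  have Ivξ : Integrable (fun ω => (inner ℝ (v ω) (ξ ω) : ℝ)) μ := aux17_integrable_inner hv hξmem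
  have Iξ : Integrable (fun ω => ‖ξ ω‖ ^ 2) μ := aux17_integrable_norm_sq hξmem
  have Ie : Integrable (fun ω => ‖e ω‖ ^ 2) μ := aux17_integrable_norm_sq he
  have Ig : Integrable (fun ω => ‖g ω‖ ^ 2) μ := aux17_integrable_norm_sq hgmem
  have Ix : Integrable (fun ω => ‖x ω - xbar‖ ^ 2) μ :=
    aux17_integrable_norm_sq (hxmem.sub (memLp_const xbar))
  -- the cross term vanishes
  have hcross : ∫ ω, (inner ℝ (v ω) (ξ ω) : ℝ) ∂μ = 0 := by
    have hsum : ∀ ω, (inner ℝ (v ω) (ξ ω) : ℝ) = ∑ i : Fin d, v ω i * ξ ω i := by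
      intro ω
      simp [PiLp.inner_apply, RCLike.inner_apply, mul_comm]
    have hint_i : ∀ i : Fin d, Integrable (fun ω => v ω i * ξ ω i) μ := by
      intro i
      have h := aux17_integrable_inner (E := ℝ)
        ((EuclideanSpace.proj i : EuclideanSpace ℝ (Fin d) →L[ℝ] ℝ).comp_memLp' hv)
        ((EuclideanSpace.proj i : EuclideanSpace ℝ (Fin d) →L[ℝ] ℝ).comp_memLp' hξmem)
      refine h.congr ?_
      filter_upwards with ω
      simp [RCLike.inner_apply, Function.comp, mul_comm]
    have hterm : ∀ i : Fin d, ∫ ω, v ω i * ξ ω i ∂μ = 0 := by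
      intro i
      set ξi : Ω → ℝ := fun ω => ξ ω i with hξi_def
      set vi : Ω → ℝ := fun ω => v ω i with hvi_def
      have hξi_int : Integrable ξi μ :=
        (((EuclideanSpace.proj i : EuclideanSpace ℝ (Fin d) →L[ℝ] ℝ).comp_memLp'
          hξmem).integrable one_le_two)
      have hvi_sm : StronglyMeasurable[m] vi :=
        (EuclideanSpace.proj (𝕜 := ℝ) i).continuous.comp_stronglyMeasurable hvm
      have hcond0 : μ[ξi|m] =ᵐ[μ] 0 := by
        refine (ae_eq_condExp_of_forall_setIntegral_eq hm hξi_int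
          (fun s _ _ => integrableOn_zero) ?_
          (stronglyMeasurable_zero : StronglyMeasurable[m] (0 : Ω → ℝ)).aestronglyMeasurable).symm
        intro s hs hμs
        have h1 : ∫ ω in s, ξ ω ∂μ = 0 := by
          rw [← setIntegral_condExp hm hξint hs]
          have h0 : μ[ξ|m] =ᵐ[μ.restrict s] 0 := ae_restrict_of_ae hξzero
          rw [integral_congr_ae h0]; simp
        have h2 : ∫ ω in s, (EuclideanSpace.proj (𝕜 := ℝ) i) (ξ ω) ∂μ
            = (EuclideanSpace.proj (𝕜 := ℝ) i) (∫ ω in s, ξ ω ∂μ) :=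
          ContinuousLinearMap.integral_comp_comm _ hξint.restrict
        have h3 : ∫ ω in s, ξi ω ∂μ
            = ∫ ω in s, (EuclideanSpace.proj (𝕜 := ℝ) i) (ξ ω) ∂μ := rfl
        rw [h3, h2, h1, map_zero]; simp
      have hpull : μ[vi * ξi|m] =ᵐ[μ] vi * μ[ξi|m] :=
        condExp_mul_of_stronglyMeasurable_left hvi_sm (hint_i i) hξi_int
      have hzero : μ[vi * ξi|m] =ᵐ[μ] 0 := by
        filter_upwards [hpull, hcond0] with ω h1 h2
        simp [h1, Pi.mul_apply, h2]
      have heq : ∫ ω, vi ω * ξi ω ∂μ = ∫ ω, (μ[vi * ξi|m]) ω ∂μ :=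
        (integral_condExp hm (f := vi * ξi)).symm
      rw [heq, integral_congr_ae hzero]; simp
    rw [integral_congr_ae (Filter.Eventually.of_forall hsum),
      integral_finset_sum _ (fun i _ => hint_i i)]
    simp [hterm]
  -- pointwise expansion
  have hexp : ∀ ω, ‖(1 - α) • e ω + α • (ξ ω + g ω)‖ ^ 2
      = ‖v ω‖ ^ 2 + 2 * α * (inner ℝ (v ω) (ξ ω) : ℝ) + α ^ 2 * ‖ξ ω‖ ^ 2 := by
    intro ω
    have harr : (1 - α) • e ω + α • (ξ ω + g ω) = v ω + α • ξ ω := by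
      rw [hv_def]; module
    rw [harr, norm_add_sq_real, real_inner_smul_right, norm_smul]
    simp [mul_pow]
    ring
  have I1 : Integrable (fun ω => ‖v ω‖ ^ 2 + 2 * α * (inner ℝ (v ω) (ξ ω) : ℝ)) μ :=
    Iv.add (Ivξ.const_mul (2 * α))
  have hsplit : ∫ ω, ‖(1 - α) • e ω + α • (ξ ω + g ω)‖ ^ 2 ∂μ
      = (∫ ω, ‖v ω‖ ^ 2 ∂μ) + 2 * α * (∫ ω, (inner ℝ (v ω) (ξ ω) : ℝ) ∂μ)
        + α ^ 2 * ∫ ω, ‖ξ ω‖ ^ 2 ∂μ := by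
    rw [integral_congr_ae (Filter.Eventually.of_forall hexp),
      integral_add I1 (Iξ.const_mul (α ^ 2)), integral_add Iv (Ivξ.const_mul (2 * α)),
      integral_const_mul, integral_const_mul]
  rw [hsplit, hcross]
  have hEvg : ∫ ω, ‖v ω‖ ^ 2 ∂μ
      ≤ (1 - α) * ∫ ω, ‖e ω‖ ^ 2 ∂μ + α * ∫ ω, ‖g ω‖ ^ 2 ∂μ := by
    have hI : Integrable (fun ω => (1 - α) * ‖e ω‖ ^ 2 + α * ‖g ω‖ ^ 2) μ :=
      (Ie.const_mul _).add (Ig.const_mul _)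
    have := integral_mono_ae Iv hI ?_
    · calc ∫ ω, ‖v ω‖ ^ 2 ∂μ ≤ ∫ ω, ((1 - α) * ‖e ω‖ ^ 2 + α * ‖g ω‖ ^ 2) ∂μ := this
        _ = (1 - α) * ∫ ω, ‖e ω‖ ^ 2 ∂μ + α * ∫ ω, ‖g ω‖ ^ 2 ∂μ := by
          rw [integral_add (Ie.const_mul _) (Ig.const_mul _), integral_const_mul,
            integral_const_mul]
    filter_upwards with ω
    have h1 : ‖v ω‖ ^ 2 = (1 - α) ^ 2 * ‖e ω‖ ^ 2
        + 2 * ((1 - α) * α) * (inner ℝ (e ω) (g ω) : ℝ) + α ^ 2 * ‖g ω‖ ^ 2 := by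
      rw [hv_def]
      simp only
      rw [norm_add_sq_real, real_inner_smul_left, real_inner_smul_right, norm_smul, norm_smul]
      simp [mul_pow]
      ring
    have h2 : (inner ℝ (e ω) (g ω) : ℝ) ≤ ‖e ω‖ * ‖g ω‖ := real_inner_le_norm (e ω) (g ω)
    nlinarith [sq_nonneg (‖e ω‖ - ‖g ω‖), mul_nonneg (le_of_lt hα0) (sub_nonneg.2 hα1),
      mul_nonneg (mul_nonneg (le_of_lt hα0) (sub_nonneg.2 hα1)) (sq_nonneg (‖e ω‖ - ‖g ω‖))]
  have hGx : ∫ ω, ‖g ω‖ ^ 2 ∂μ ≤ L ^ 2 * ∫ ω, ‖x ω - xbar‖ ^ 2 ∂μ := by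
    rw [← integral_const_mul]
    refine integral_mono_ae Ig (Ix.const_mul _) ?_
    filter_upwards [hg] with ω hω
    calc ‖g ω‖ ^ 2 ≤ (L * ‖x ω - xbar‖) ^ 2 := by
          nlinarith [norm_nonneg (g ω), norm_nonneg (x ω - xbar)]
      _ = L ^ 2 * ‖x ω - xbar‖ ^ 2 := by ring
  nlinarith [mul_le_mul_of_nonneg_left hGx (le_of_lt hα0),
    mul_le_mul_of_nonneg_left hξvar (sq_nonneg α)]
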